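/- Let α, β, γ, δ ≥ 0 be real numbers, and define f(x,y) = x·y/(x + y) for x + y > 0 and f(0,0) = 0. Then the supremum over (t₁, t₂) ∈ [0,1]² of min( t₁·α + t₂·γ , t₁·α + (1 − t₂)·δ , t₂·γ + (1 − t₁)·β , (1 − t₁)·β + (1 − t₂)·δ ) equals f(α, β) + f(γ, δ). -/

import Mathlib

/-- `f x y = xy/(x+y)` for `x + y > 0`, and `f 0 0 = 0`. -/
noncomputable def cutRate (x y : ℝ) : ℝ := if 0 < x + y then x * y / (x + y) else 0

private lemma aux_ub (α β : ℝ) (hα : 0 ≤ α) (hβ : 0 ≤ β) (t : ℝ)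
    (h0 : 0 ≤ t) (h1 : t ≤ 1) : min (t * α) ((1 - t) * β) ≤ cutRate α β := by
  unfold cutRate
  by_cases h : 0 < α + β
  · rw [if_pos h]
    rcases le_total t (β / (α + β)) with ht | ht
    · refine le_trans (min_le_left _ _) ?_
      rw [le_div_iff₀ h]
      have := (le_div_iff₀ h).mp ht
      nlinarith
    · refine le_trans (min_le_right _ _) ?_
      rw [le_div_iff₀ h]
      have := (div_le_iff₀ h).mp ht
      nlinarith
  · have ha : α = 0 := by linarith
    have hb : β = 0 := by linarith
    simp [ha, hb, h]

private lemma aux_ex (α β : ℝ) (hα : 0 ≤ α) (hβ : 0 ≤ β) :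
    ∃ t, 0 ≤ t ∧ t ≤ 1 ∧ t * α = cutRate α β ∧ (1 - t) * β = cutRate α β := by
  unfold cutRate
  by_cases h : 0 < α + β
  · refine ⟨β / (α + β), by positivity, ?_, ?_, ?_⟩
    · rw [div_le_one h]; linarith
    · rw [if_pos h]; field_simp
    · rw [if_pos h]; field_simp; ring
  · have ha : α = 0 := by linarith
    have hb : β = 0 := by linarith
    exact ⟨0, le_refl _, zero_le_one, by simp [ha, hb, h], by simp [ha, hb, h]⟩

private lemma min4_le (a b c d : ℝ) :
    min (min (a + c) (a + d)) (min (c + b) (b + d)) ≤ min a b + min c d := by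
  rcases le_total a b with h | h <;> rcases le_total c d with h' | h'
  · rw [min_eq_left h, min_eq_left h']
    exact (min_le_left _ _).trans (min_le_left _ _)
  · rw [min_eq_left h, min_eq_right h']
    exact (min_le_left _ _).trans (min_le_right _ _)
  · rw [min_eq_right h, min_eq_left h']
    exact le_trans (min_le_right _ _) ((min_le_left _ _).trans_eq (add_comm c b))
  · rw [min_eq_right h, min_eq_right h']
    exact (min_le_right _ _).trans (min_le_right _ _)

theorem optimal_cutset_rate (α β γ δ : ℝ)
    (hα : 0 ≤ α) (hβ : 0 ≤ β) (hγ : 0 ≤ γ) (hδ : 0 ≤ δ) :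
    sSup {m : ℝ | ∃ t₁ ∈ Set.Icc (0:ℝ) 1, ∃ t₂ ∈ Set.Icc (0:ℝ) 1,
        m = min (min (t₁ * α + t₂ * γ) (t₁ * α + (1 - t₂) * δ))
                (min (t₂ * γ + (1 - t₁) * β) ((1 - t₁) * β + (1 - t₂) * δ))} =
      cutRate α β + cutRate γ δ := by
  have hub : ∀ m ∈ {m : ℝ | ∃ t₁ ∈ Set.Icc (0:ℝ) 1, ∃ t₂ ∈ Set.Icc (0:ℝ) 1,
        m = min (min (t₁ * α + t₂ * γ) (t₁ * α + (1 - t₂) * δ))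
                (min (t₂ * γ + (1 - t₁) * β) ((1 - t₁) * β + (1 - t₂) * δ))},
      m ≤ cutRate α β + cutRate γ δ := by
    rintro m ⟨t₁, ⟨h10, h11⟩, t₂, ⟨h20, h21⟩, rfl⟩
    exact (min4_le (t₁ * α) ((1 - t₁) * β) (t₂ * γ) ((1 - t₂) * δ)).trans
      (add_le_add (aux_ub α β hα hβ t₁ h10 h11) (aux_ub γ δ hγ hδ t₂ h20 h21))
  apply le_antisymm
  · exact csSup_le ⟨_, 0, ⟨le_refl _, zero_le_one⟩, 0, ⟨le_refl _, zero_le_one⟩, rfl⟩ hub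
  · obtain ⟨t₁, h10, h11, ha1, hb1⟩ := aux_ex α β hα hβ
    obtain ⟨t₂, h20, h21, ha2, hb2⟩ := aux_ex γ δ hγ hδ
    apply le_csSup ⟨_, hub⟩
    exact ⟨t₁, ⟨h10, h11⟩, t₂, ⟨h20, h21⟩, by
      rw [ha1, hb1, ha2, hb2]; simp [min_self, add_comm]⟩
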